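/- An unrooted binary leaf-labelled tree on n ≥ 4 leaves is uniquely determined by its set of splits, i.e., by the set of bipartitions of [n] induced by removing each edge. -/

import Mathlib

set_option linter.unusedSectionVars false
set_option linter.unusedVariables false
set_option maxHeartbeats 1000000

open SimpleGraph

/-- A binary (trivalent) leaf-labelled tree on `n` leaves: an unrooted tree whose
vertex set consists of `n` leaves (of degree 1, labelled by `Fin n`) and `n - 2`
internal vertices (of degree 3). -/
structure BinTree (n : ℕ) where
  G : SimpleGraph (Fin n ⊕ Fin (n - 2))
  isTree : G.IsTree
  degLeaf : ∀ i : Fin n, (G.neighborSet (Sum.inl i)).ncard = 1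
  degInternal : ∀ j : Fin (n - 2), (G.neighborSet (Sum.inr j)).ncard = 3

/-- Two binary leaf-labelled trees are the same tree when there is a graph
isomorphism between them fixing each leaf label. -/
def BinTree.LabelEquiv {n : ℕ} (T₁ T₂ : BinTree n) : Prop :=
  ∃ φ : T₁.G ≃g T₂.G, ∀ i : Fin n, φ (Sum.inl i) = Sum.inl i

/-- The splits of a binary leaf-labelled tree: for each edge `e` and each of its
two endpoints, the set of leaf labels lying on that endpoint's side of `e`
(i.e. reachable from that endpoint after deleting `e`). -/
def BinTree.splits {n : ℕ} (T : BinTree n) : Set (Set (Fin n)) :=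
  {A | ∃ e ∈ T.G.edgeSet, ∃ v, v ∈ e ∧
        A = {i : Fin n | (T.G.deleteEdges {e}).Reachable v (Sum.inl i)}}

namespace TreeSplit

variable {V : Type*} [DecidableEq V] {G : SimpleGraph V}

lemma reach_del_of_walk {e : Sym2 V} {a b : V} (p : G.Walk a b) (h : e ∉ p.edges) :
    (G.deleteEdges {e}).Reachable a b :=
  ⟨p.toDeleteEdges {e} (fun f hf hfe => h ((Set.mem_singleton_iff.mp hfe) ▸ hf))⟩

lemma reach_del_support {e : Sym2 V} {a b c : V} (p : G.Walk a b) (h : e ∉ p.edges)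
    (hc : c ∈ p.support) : (G.deleteEdges {e}).Reachable a c :=
  reach_del_of_walk (p.takeUntil c hc) (fun hf => h (p.edges_takeUntil_subset hc hf))

lemma cross {y y' : V} {a b : V} (p : G.Walk a b) (h : s(y,y') ∈ p.edges) :
    (G.deleteEdges {s(y,y')}).Reachable a y ∨ (G.deleteEdges {s(y,y')}).Reachable a y' := by
  induction p with
  | nil => simp at h
  | @cons u v b hadj q ih =>
    by_cases heq : s(y,y') = s(u,v)
    · have hu : u ∈ s(y,y') := by rw [heq]; exact Sym2.mem_mk_left u v
      rcases Sym2.mem_iff.mp hu with h1 | h1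
      · exact Or.inl (h1 ▸ Reachable.refl u)
      · exact Or.inr (h1 ▸ Reachable.refl u)
    · have hmem : s(y,y') ∈ q.edges := by
        rcases List.mem_cons.mp h with h1 | h1
        · exact absurd h1 heq
        · exact h1
      have hadj' : (G.deleteEdges {s(y,y')}).Adj u v := by
        rw [deleteEdges_adj]
        exact ⟨hadj, fun hh => heq (Set.mem_singleton_iff.mp hh).symm⟩
      rcases ih hmem with h1 | h1
      · exact Or.inl ((hadj'.reachable).trans h1)
      · exact Or.inr ((hadj'.reachable).trans h1)

lemma reach_or {y y' a : V} (hr : G.Reachable a y) :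
    (G.deleteEdges {s(y,y')}).Reachable a y ∨ (G.deleteEdges {s(y,y')}).Reachable a y' := by
  obtain ⟨p⟩ := hr
  by_cases h : s(y,y') ∈ p.edges
  · exact cross p h
  · exact Or.inl (reach_del_of_walk p h)

lemma bridge (hT : G.IsTree) {x y : V} (h : G.Adj x y) :
    ¬ (G.deleteEdges {s(x,y)}).Reachable x y := by
  have hb := isAcyclic_iff_forall_edge_isBridge.mp hT.2 ((G.mem_edgeSet).mpr h)
  exact isBridge_iff.mp hb

lemma path_unique (hT : G.IsTree) {a b : V} {p q : G.Walk a b} (hp : p.IsPath) (hq : q.IsPath) :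
    p = q := by
  obtain ⟨r, -, hr⟩ := hT.existsUnique_path a b
  rw [hr p hp, hr q hq]

lemma unique_path_avoid (hT : G.IsTree) {e : Sym2 V} {a b : V}
    (h : (G.deleteEdges {e}).Reachable a b) {p : G.Walk a b} (hp : p.IsPath) : e ∉ p.edges := by
  obtain ⟨q0⟩ := h
  obtain ⟨q', hq'path⟩ := q0.toPath
  have hsub : ∀ f ∈ q'.edges, f ∈ G.edgeSet := by
    intro f hf
    have := Walk.edges_subset_edgeSet _ hf
    rw [edgeSet_deleteEdges] at this
    exact this.1
  have htr : (q'.transfer G hsub).IsPath := Walk.IsPath.transfer hsub hq'path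
  have := path_unique hT hp htr
  intro hmem
  rw [this] at hmem
  rw [Walk.edges_transfer] at hmem
  have := Walk.edges_subset_edgeSet _ hmem
  rw [edgeSet_deleteEdges] at this
  exact this.2 rfl

lemma first_edge {a c b : V} {p : G.Walk a b} (hp : p.IsPath) (h : s(a,c) ∈ p.edges) :
    ∃ (hadj : G.Adj a c) (q : G.Walk c b), q.IsPath ∧ a ∉ q.support ∧ s(a,c) ∉ q.edges := by
  cases p with
  | nil => simp at h
  | @cons u v w hadj q =>
    have hq : q.IsPath ∧ a ∉ q.support := by
      have := (Walk.cons_isPath_iff hadj q).mp hp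
      exact ⟨this.1, this.2⟩
    rcases List.mem_cons.mp h with h1 | h1
    · have hcv : c = v := Sym2.congr_right.mp h1
      subst hcv
      exact ⟨hadj, q, hq.1, hq.2, fun hh => hq.2 (Walk.fst_mem_support_of_mem_edges q hh)⟩
    · exact absurd (Walk.fst_mem_support_of_mem_edges q h1) hq.2

lemma first_edge_unique {a c c' b : V} {p : G.Walk a b} (hp : p.IsPath)
    (h : s(a,c) ∈ p.edges) (h' : s(a,c') ∈ p.edges) : c = c' := by
  cases p with
  | nil => simp at h
  | @cons u v w hadj q =>
    have hq : q.IsPath ∧ a ∉ q.support := by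
      have := (Walk.cons_isPath_iff hadj q).mp hp
      exact ⟨this.1, this.2⟩
    have e1 : c = v := by
      rcases List.mem_cons.mp h with h1 | h1
      · exact Sym2.congr_right.mp h1
      · exact absurd (Walk.fst_mem_support_of_mem_edges q h1) hq.2
    have e2 : c' = v := by
      rcases List.mem_cons.mp h' with h1 | h1
      · exact Sym2.congr_right.mp h1
      · exact absurd (Walk.fst_mem_support_of_mem_edges q h1) hq.2
    rw [e1, e2]

lemma isolated_reach {H : SimpleGraph V} {v : V} (h : ∀ x, ¬ H.Adj v x) {w : V}
    (hr : H.Reachable v w) : v = w := by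
  obtain ⟨p⟩ := hr
  cases p with
  | nil => rfl
  | cons ha q => exact absurd ha (h _)

end TreeSplit

namespace TreeSplit

variable {n : ℕ}

/-- The set of leaves on `v`'s side of edge `e`. -/
def side (T : BinTree n) (e : Sym2 (Fin n ⊕ Fin (n-2))) (v : Fin n ⊕ Fin (n-2)) : Set (Fin n) :=
  {i | (T.G.deleteEdges {e}).Reachable v (Sum.inl i)}

lemma mem_side {T : BinTree n} {e v i} :
    i ∈ side T e v ↔ (T.G.deleteEdges {e}).Reachable v (Sum.inl i) := Iff.rfl

lemma side_mem_splits {T : BinTree n} {v w} (h : T.G.Adj v w) : side T s(v,w) w ∈ T.splits :=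
  ⟨s(v,w), (T.G.mem_edgeSet).mpr h, w, Sym2.mem_mk_right v w, rfl⟩

lemma side_swap {T : BinTree n} {v w x} : side T s(v,w) x = side T s(w,v) x := by
  rw [Sym2.eq_swap]

lemma splits_elim {T : BinTree n} {A} (hA : A ∈ T.splits) :
    ∃ v w, T.G.Adj v w ∧ A = side T s(v,w) w := by
  obtain ⟨e, he, x, hx, rfl⟩ := hA
  induction e using Sym2.ind with
  | _ a b =>
    rw [mem_edgeSet] at he
    rcases Sym2.mem_iff.mp hx with rfl | rfl
    · exact ⟨b, x, he.symm, by rw [side_swap]; rfl⟩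
    · exact ⟨a, x, he, rfl⟩

/-- Leaves on opposite sides of an edge partition the leaf set. -/
lemma side_compl {T : BinTree n} {v w} (h : T.G.Adj v w) :
    (side T s(v,w) w)ᶜ = side T s(v,w) v := by
  ext i
  simp only [Set.mem_compl_iff, mem_side]
  constructor
  · intro hi
    rcases reach_or (y := v) (y' := w) (T.isTree.1.1 (Sum.inl i) v) with h1 | h1
    · exact h1.symm
    · exact absurd h1.symm hi
  · intro h1 h2
    exact bridge T.isTree h (h1.trans h2.symm)
end TreeSplit

namespace TreeSplit

lemma leaf_unique_nbr {n : ℕ} {T : BinTree n} {i : Fin n} {x y} (hx : T.G.Adj (Sum.inl i) x)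
    (hy : T.G.Adj (Sum.inl i) y) : x = y := by
  obtain ⟨a, ha⟩ := Set.ncard_eq_one.mp (T.degLeaf i)
  have h1 : x ∈ T.G.neighborSet (Sum.inl i) := hx
  have h2 : y ∈ T.G.neighborSet (Sum.inl i) := hy
  rw [ha] at h1 h2
  exact (Set.mem_singleton_iff.mp h1).trans (Set.mem_singleton_iff.mp h2).symm

lemma side_leaf {n : ℕ} {T : BinTree n} {i : Fin n} {w} (h : T.G.Adj (Sum.inl i) w) :
    side T s(Sum.inl i, w) (Sum.inl i) = {i} := by
  ext k
  simp only [mem_side, Set.mem_singleton_iff]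
  constructor
  · intro hk
    have hiso : ∀ x, ¬ (T.G.deleteEdges {s(Sum.inl i, w)}).Adj (Sum.inl i) x := by
      intro x hx
      rw [deleteEdges_adj] at hx
      have hxw := leaf_unique_nbr hx.1 h
      exact hx.2 (by rw [hxw]; exact Set.mem_singleton _)
    have := isolated_reach hiso hk
    exact (Sum.inl_injective this).symm
  · rintro rfl
    exact Reachable.refl _

lemma side_cover {n : ℕ} {T : BinTree n} {v : Fin n ⊕ Fin (n-2)} {k : Fin n}
    (hvk : v ≠ Sum.inl k) : ∃ x, T.G.Adj v x ∧ k ∈ side T s(v,x) x := by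
  obtain ⟨p0⟩ := T.isTree.1.1 v (Sum.inl k)
  obtain ⟨p, hp⟩ := p0.toPath
  cases p with
  | nil => exact absurd rfl hvk
  | @cons u x w hadj q =>
    have hq := (Walk.cons_isPath_iff hadj q).mp hp
    refine ⟨x, hadj, reach_del_of_walk q ?_⟩
    intro hmem
    exact hq.2 (Walk.fst_mem_support_of_mem_edges q hmem)

lemma sides_disjoint {n : ℕ} {T : BinTree n} {v x y} (hx : T.G.Adj v x) (hy : T.G.Adj v y)
    (hxy : x ≠ y) : side T s(v,x) x ∩ side T s(v,y) y = ∅ := by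
  by_contra hne
  obtain ⟨k, hk⟩ := Set.nonempty_iff_ne_empty.mpr hne
  obtain ⟨p0⟩ := T.isTree.1.1 v (Sum.inl k)
  obtain ⟨p, hp⟩ := p0.toPath
  have hin : ∀ z, T.G.Adj v z → k ∈ side T s(v,z) z → s(v,z) ∈ p.edges := by
    intro z hz hkz
    by_contra hmem
    have h1 : (T.G.deleteEdges {s(v,z)}).Reachable v (Sum.inl k) := reach_del_of_walk p hmem
    exact bridge T.isTree hz (h1.trans (Reachable.symm hkz))
  have e1 := hin x hx hk.1
  have e2 := hin y hy hk.2
  exact hxy (first_edge_unique hp e1 e2)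

lemma dist_del_eq {V : Type*} [DecidableEq V] {G : SimpleGraph V} (hT : G.IsTree) {e : Sym2 V}
    {w x : V} (hr : (G.deleteEdges {e}).Reachable w x) {p : G.Walk w x} (hp : p.IsPath) :
    (G.deleteEdges {e}).dist w x = p.length := by
  obtain ⟨q, hq, hlen⟩ := hr.exists_path_of_dist
  have hsub : ∀ f ∈ q.edges, f ∈ G.edgeSet := by
    intro f hf
    have := Walk.edges_subset_edgeSet _ hf
    rw [edgeSet_deleteEdges] at this
    exact this.1
  have := path_unique hT hp (Walk.IsPath.transfer hsub hq)
  rw [← hlen, this, Walk.length_transfer]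

lemma side_nonempty {n : ℕ} {T : BinTree n} {v w} (h : T.G.Adj v w) :
    (side T s(v,w) w).Nonempty := by
  classical
  set G' := T.G.deleteEdges {s(v,w)} with hG'
  set C : Set (Fin n ⊕ Fin (n-2)) := {x | G'.Reachable w x} with hC
  obtain ⟨m, hmC, hmax⟩ := Set.exists_max_image C (fun x => G'.dist w x) C.toFinite ⟨w, Reachable.refl w⟩
  cases m with
  | inl i => exact ⟨i, hmC⟩
  | inr j =>
    exfalso
    have hmC' : G'.Reachable w (Sum.inr j) := hmC
    set m : Fin n ⊕ Fin (n-2) := Sum.inr j with hmdef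
    have hreach := hmC'
    obtain ⟨p0⟩ := hreach
    obtain ⟨p', hp'⟩ := p0.toPath
    have hsub : ∀ f ∈ p'.edges, f ∈ T.G.edgeSet := by
      intro f hf
      have := Walk.edges_subset_edgeSet _ hf
      rw [edgeSet_deleteEdges] at this
      exact this.1
    set p : T.G.Walk w m := p'.transfer T.G hsub with hpdef
    have hp : p.IsPath := Walk.IsPath.transfer hsub hp'
    have hpe : s(v,w) ∉ p.edges := by
      rw [hpdef, Walk.edges_transfer]
      intro hmem
      have := Walk.edges_subset_edgeSet _ hmem
      rw [edgeSet_deleteEdges] at this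
      exact this.2 rfl
    -- m has three neighbours
    obtain ⟨a, b, c, hab, hac, hbc, hnbr⟩ := Set.ncard_eq_three.mp (T.degInternal j)
    have hnbr' : ∀ t, T.G.Adj m t ↔ t = a ∨ t = b ∨ t = c := by
      intro t
      constructor
      · intro ht
        have : t ∈ T.G.neighborSet (Sum.inr j) := ht
        rw [hnbr] at this
        simpa using this
      · intro ht
        have : t ∈ T.G.neighborSet (Sum.inr j) := by
          rw [hnbr]; simpa using ht
        exact this
    -- at most one neighbour is excluded by each condition
    have hP1 : ∀ t1 t2, s(m,t1) = s(v,w) → s(m,t2) = s(v,w) → t1 = t2 := by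
      intro t1 t2 h1 h2
      exact Sym2.congr_right.mp (h1.trans h2.symm)
    have hP2 : ∀ t1 t2, s(m,t1) ∈ p.edges → s(m,t2) ∈ p.edges → t1 = t2 := by
      intro t1 t2 h1 h2
      have hrev : p.reverse.IsPath := (Walk.isPath_reverse_iff p).mpr hp
      have h1' : s(m,t1) ∈ p.reverse.edges := by rw [Walk.edges_reverse]; simpa using h1
      have h2' : s(m,t2) ∈ p.reverse.edges := by rw [Walk.edges_reverse]; simpa using h2
      exact first_edge_unique hrev h1' h2'
    have hgood : ∃ t, T.G.Adj m t ∧ s(m,t) ≠ s(v,w) ∧ s(m,t) ∉ p.edges := by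
      by_contra hbad
      push_neg at hbad
      have key : ∀ t, T.G.Adj m t → s(m,t) = s(v,w) ∨ s(m,t) ∈ p.edges := by
        intro t ht
        by_cases h1 : s(m,t) = s(v,w)
        · exact Or.inl h1
        · exact Or.inr (hbad t ht h1)
      have ha' : T.G.Adj m a := (hnbr' a).mpr (Or.inl rfl)
      have hb' : T.G.Adj m b := (hnbr' b).mpr (Or.inr (Or.inl rfl))
      have hc' : T.G.Adj m c := (hnbr' c).mpr (Or.inr (Or.inr rfl))
      rcases key a ha' with ka | ka <;> rcases key b hb' with kb | kb <;>
        rcases key c hc' with kc | kc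
      · exact hab (hP1 a b ka kb)
      · exact hab (hP1 a b ka kb)
      · exact hac (hP1 a c ka kc)
      · exact hbc (hP2 b c kb kc)
      · exact hbc (hP1 b c kb kc)
      · exact hac (hP2 a c ka kc)
      · exact hab (hP2 a b ka kb)
      · exact hab (hP2 a b ka kb)
    obtain ⟨t, hmt, ht1, ht2⟩ := hgood
    -- t is not on p
    have htsupp : t ∉ p.support := by
      intro hts
      have hdrop := p.dropUntil t hts
      have hdpath : (p.dropUntil t hts).IsPath := hp.dropUntil hts
      have hdedge : s(m,t) ∉ (p.dropUntil t hts).edges := by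
        intro hmem
        exact ht2 (p.edges_dropUntil_subset hts hmem)
      -- (dropUntil).reverse and the single edge are both paths m → t
      have hsingle : (Walk.cons hmt Walk.nil : T.G.Walk m t).IsPath := by
        simp [Walk.cons_isPath_iff, hmt.ne]
      have hrevp : (p.dropUntil t hts).reverse.IsPath :=
        (Walk.isPath_reverse_iff _).mpr hdpath
      have heq := path_unique T.isTree hrevp hsingle
      have : s(m,t) ∈ (p.dropUntil t hts).reverse.edges := by
        rw [heq]; simp
      rw [Walk.edges_reverse] at this
      simp only [List.mem_reverse] at this
      exact hdedge this
    -- extend p by the edge to t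
    have hconc : (p.concat hmt).IsPath := by
      rw [← Walk.isPath_reverse_iff, Walk.reverse_concat]
      rw [Walk.cons_isPath_iff]
      refine ⟨(Walk.isPath_reverse_iff _).mpr hp, ?_⟩
      rw [Walk.support_reverse]
      simpa using htsupp
    have hconce : s(v,w) ∉ (p.concat hmt).edges := by
      rw [Walk.edges_concat]
      intro hmem
      rw [List.concat_eq_append] at hmem
      rcases List.mem_append.mp hmem with h1 | h1
      · exact hpe h1
      · have h2 : s(v,w) = s(m,t) := by simpa using h1
        exact ht1 h2.symm
    have htC : G'.Reachable w t := reach_del_of_walk (p.concat hmt) hconce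
    have d1 : G'.dist w m = p.length := dist_del_eq T.isTree hmC' hp
    have d2 : G'.dist w t = p.length + 1 := by
      have := dist_del_eq T.isTree htC hconc
      rwa [Walk.length_concat] at this
    have := hmax t htC
    simp only [d1, d2] at this
    omega

end TreeSplit

namespace TreeSplit

/-- Leaf reachable after deleting two vertex-disjoint edges. -/
lemma two_del_nonempty {n : ℕ} {T : BinTree n} {e f : Sym2 (Fin n ⊕ Fin (n-2))}
    (hdisj : ∀ z, z ∈ e → z ∈ f → False) (u : Fin n ⊕ Fin (n-2)) :
    ∃ i : Fin n, (T.G.deleteEdges {e,f}).Reachable u (Sum.inl i) := by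
  classical
  set G' := T.G.deleteEdges {e,f} with hG'
  set C : Set (Fin n ⊕ Fin (n-2)) := {x | G'.Reachable u x} with hC
  obtain ⟨m, hmC, hmax⟩ := Set.exists_max_image C (fun x => G'.dist u x) C.toFinite
    ⟨u, Reachable.refl u⟩
  cases m with
  | inl i => exact ⟨i, hmC⟩
  | inr j =>
    exfalso
    have hmC' : G'.Reachable u (Sum.inr j) := hmC
    set m : Fin n ⊕ Fin (n-2) := Sum.inr j with hmdef
    have hreach := hmC'
    obtain ⟨p0⟩ := hreach
    obtain ⟨p', hp'⟩ := p0.toPath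
    have hsub : ∀ g ∈ p'.edges, g ∈ T.G.edgeSet := by
      intro g hg
      have := Walk.edges_subset_edgeSet _ hg
      rw [edgeSet_deleteEdges] at this
      exact this.1
    set p : T.G.Walk u m := p'.transfer T.G hsub with hpdef
    have hp : p.IsPath := Walk.IsPath.transfer hsub hp'
    have hpef : e ∉ p.edges ∧ f ∉ p.edges := by
      constructor <;>
      · rw [hpdef, Walk.edges_transfer]
        intro hmem
        have := Walk.edges_subset_edgeSet _ hmem
        rw [edgeSet_deleteEdges] at this
        simp at this
    obtain ⟨a, b, c, hab, hac, hbc, hnbr⟩ := Set.ncard_eq_three.mp (T.degInternal j)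
    have hnbr' : ∀ t, T.G.Adj m t ↔ t = a ∨ t = b ∨ t = c := by
      intro t
      constructor
      · intro ht
        have : t ∈ T.G.neighborSet (Sum.inr j) := ht
        rw [hnbr] at this
        simpa using this
      · intro ht
        have : t ∈ T.G.neighborSet (Sum.inr j) := by
          rw [hnbr]; simpa using ht
        exact this
    -- exclusion conditions
    have hP1 : ∀ t1 t2, (s(m,t1) = e ∨ s(m,t1) = f) → (s(m,t2) = e ∨ s(m,t2) = f) → t1 = t2 := by
      intro t1 t2 h1 h2
      rcases h1 with h1 | h1 <;> rcases h2 with h2 | h2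
      · exact Sym2.congr_right.mp (h1.trans h2.symm)
      · exact absurd (fun z => hdisj z) (by
          intro hh
          exact hh m (h1 ▸ Sym2.mem_mk_left m t1) (h2 ▸ Sym2.mem_mk_left m t2))
      · exact absurd (fun z => hdisj z) (by
          intro hh
          exact hh m (h2 ▸ Sym2.mem_mk_left m t2) (h1 ▸ Sym2.mem_mk_left m t1))
      · exact Sym2.congr_right.mp (h1.trans h2.symm)
    have hP2 : ∀ t1 t2, s(m,t1) ∈ p.edges → s(m,t2) ∈ p.edges → t1 = t2 := by
      intro t1 t2 h1 h2
      have hrev : p.reverse.IsPath := (Walk.isPath_reverse_iff p).mpr hp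
      have h1' : s(m,t1) ∈ p.reverse.edges := by rw [Walk.edges_reverse]; simpa using h1
      have h2' : s(m,t2) ∈ p.reverse.edges := by rw [Walk.edges_reverse]; simpa using h2
      exact first_edge_unique hrev h1' h2'
    have hgood : ∃ t, T.G.Adj m t ∧ s(m,t) ≠ e ∧ s(m,t) ≠ f ∧ s(m,t) ∉ p.edges := by
      by_contra hbad
      push_neg at hbad
      have key : ∀ t, T.G.Adj m t → (s(m,t) = e ∨ s(m,t) = f) ∨ s(m,t) ∈ p.edges := by
        intro t ht
        by_cases h1 : s(m,t) = e
        · exact Or.inl (Or.inl h1)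
        · by_cases h2 : s(m,t) = f
          · exact Or.inl (Or.inr h2)
          · exact Or.inr (hbad t ht h1 h2)
      have ha' : T.G.Adj m a := (hnbr' a).mpr (Or.inl rfl)
      have hb' : T.G.Adj m b := (hnbr' b).mpr (Or.inr (Or.inl rfl))
      have hc' : T.G.Adj m c := (hnbr' c).mpr (Or.inr (Or.inr rfl))
      rcases key a ha' with ka | ka <;> rcases key b hb' with kb | kb <;>
        rcases key c hc' with kc | kc
      · exact hab (hP1 a b ka kb)
      · exact hab (hP1 a b ka kb)
      · exact hac (hP1 a c ka kc)
      · exact hbc (hP2 b c kb kc)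
      · exact hbc (hP1 b c kb kc)
      · exact hac (hP2 a c ka kc)
      · exact hab (hP2 a b ka kb)
      · exact hab (hP2 a b ka kb)
    obtain ⟨t, hmt, ht1, ht2, ht3⟩ := hgood
    have htsupp : t ∉ p.support := by
      intro hts
      have hdpath : (p.dropUntil t hts).IsPath := hp.dropUntil hts
      have hdedge : s(m,t) ∉ (p.dropUntil t hts).edges := by
        intro hmem
        exact ht3 (p.edges_dropUntil_subset hts hmem)
      have hsingle : (Walk.cons hmt Walk.nil : T.G.Walk m t).IsPath := by
        simp [Walk.cons_isPath_iff, hmt.ne]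
      have hrevp : (p.dropUntil t hts).reverse.IsPath :=
        (Walk.isPath_reverse_iff _).mpr hdpath
      have heq := path_unique T.isTree hrevp hsingle
      have : s(m,t) ∈ (p.dropUntil t hts).reverse.edges := by
        rw [heq]; simp
      rw [Walk.edges_reverse] at this
      simp only [List.mem_reverse] at this
      exact hdedge this
    have hconc : (p.concat hmt).IsPath := by
      rw [← Walk.isPath_reverse_iff, Walk.reverse_concat]
      rw [Walk.cons_isPath_iff]
      refine ⟨(Walk.isPath_reverse_iff _).mpr hp, ?_⟩
      rw [Walk.support_reverse]
      simpa using htsupp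
    have hconce : ∀ g ∈ (p.concat hmt).edges, g ∉ ({e, f} : Set _) := by
      intro g hg hgef
      rw [Walk.edges_concat, List.concat_eq_append] at hg
      rcases List.mem_append.mp hg with h1 | h1
      · rcases hgef with h2 | h2
        · exact hpef.1 (h2 ▸ h1)
        · exact hpef.2 ((Set.mem_singleton_iff.mp h2) ▸ h1)
      · have h2 : g = s(m,t) := by simpa using h1
        rcases hgef with h3 | h3
        · exact ht1 (h2 ▸ h3)
        · exact ht2 (h2 ▸ (Set.mem_singleton_iff.mp h3))
    have htC : G'.Reachable u t := ⟨(p.concat hmt).toDeleteEdges {e,f} hconce⟩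
    have hdel_path : ∀ {x : Fin n ⊕ Fin (n-2)} (hr : G'.Reachable u x) {q : T.G.Walk u x},
        q.IsPath → G'.dist u x = q.length := by
      intro x hr q hq
      obtain ⟨r, hrp, hlen⟩ := hr.exists_path_of_dist
      have hsub2 : ∀ g ∈ r.edges, g ∈ T.G.edgeSet := by
        intro g hg
        have := Walk.edges_subset_edgeSet _ hg
        rw [edgeSet_deleteEdges] at this
        exact this.1
      have := path_unique T.isTree hq (Walk.IsPath.transfer hsub2 hrp)
      rw [← hlen, this, Walk.length_transfer]
    have d1 : G'.dist u m = p.length := hdel_path hmC' hp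
    have d2 : G'.dist u t = p.length + 1 := by
      have := hdel_path htC hconc
      rwa [Walk.length_concat] at this
    have := hmax t htC
    simp only [d1, d2] at this
    omega

end TreeSplit

namespace TreeSplit

variable {n : ℕ}

lemma exists_path_avoid {V : Type*} [DecidableEq V] {G : SimpleGraph V} {e : Sym2 V} {a b : V}
    (h : (G.deleteEdges {e}).Reachable a b) :
    ∃ p : G.Walk a b, p.IsPath ∧ e ∉ p.edges := by
  obtain ⟨q0⟩ := h
  obtain ⟨q, hq⟩ := q0.toPath
  have hsub : ∀ g ∈ q.edges, g ∈ G.edgeSet := by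
    intro g hg
    have := Walk.edges_subset_edgeSet _ hg
    rw [edgeSet_deleteEdges] at this
    exact this.1
  refine ⟨q.transfer G hsub, Walk.IsPath.transfer hsub hq, ?_⟩
  rw [Walk.edges_transfer]
  intro hmem
  have := Walk.edges_subset_edgeSet _ hmem
  rw [edgeSet_deleteEdges] at this
  exact this.2 rfl

lemma side_ne_chain {T : BinTree n} {v w y} (hvw : T.G.Adj v w) (hwy : T.G.Adj w y)
    (hvy : v ≠ y) : side T s(v,w) w ≠ side T s(w,y) y := by
  intro hs
  cases w with
  | inl i => exact hvy (leaf_unique_nbr hvw.symm hwy)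
  | inr j =>
    set w : Fin n ⊕ Fin (n-2) := Sum.inr j with hwdef
    obtain ⟨a, b, c, hab, hac, hbc, hnbr⟩ := Set.ncard_eq_three.mp (T.degInternal j)
    have hmemn : ∀ t, T.G.Adj w t ↔ t = a ∨ t = b ∨ t = c := by
      intro t
      constructor
      · intro ht
        have : t ∈ T.G.neighborSet (Sum.inr j) := ht
        rw [hnbr] at this; simpa using this
      · intro ht
        have : t ∈ T.G.neighborSet (Sum.inr j) := by rw [hnbr]; simpa using ht
        exact this
    have hv : v = a ∨ v = b ∨ v = c := (hmemn v).mp hvw.symm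
    have hy : y = a ∨ y = b ∨ y = c := (hmemn y).mp hwy
    have hz : ∃ z, T.G.Adj w z ∧ z ≠ v ∧ z ≠ y := by
      rcases hv with rfl | rfl | rfl <;> rcases hy with rfl | rfl | rfl
      · exact absurd rfl hvy
      · exact ⟨c, (hmemn c).mpr (Or.inr (Or.inr rfl)), fun h => hac h.symm, fun h => hbc h.symm⟩
      · exact ⟨b, (hmemn b).mpr (Or.inr (Or.inl rfl)), fun h => hab h.symm, hbc⟩
      · exact ⟨c, (hmemn c).mpr (Or.inr (Or.inr rfl)), fun h => hbc h.symm, fun h => hac h.symm⟩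
      · exact absurd rfl hvy
      · exact ⟨a, (hmemn a).mpr (Or.inl rfl), hab, hac⟩
      · exact ⟨b, (hmemn b).mpr (Or.inr (Or.inl rfl)), hbc, fun h => hab h.symm⟩
      · exact ⟨a, (hmemn a).mpr (Or.inl rfl), hac, hab⟩
      · exact absurd rfl hvy
    obtain ⟨z, hwz, hzv, hzy⟩ := hz
    obtain ⟨k, hk⟩ := side_nonempty hwz
    obtain ⟨q, hq, hqe⟩ := exists_path_avoid hk
    have hwsupp : w ∉ q.support := by
      intro hws
      exact bridge T.isTree hwz (reach_del_support q hqe hws).symm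
    have hnw : ∀ g ∈ q.edges, w ∉ g := by
      intro g hg hwg
      induction g using Sym2.ind with
      | _ g1 g2 =>
        rcases Sym2.mem_iff.mp hwg with rfl | rfl
        · exact hwsupp (Walk.fst_mem_support_of_mem_edges q hg)
        · exact hwsupp (Walk.snd_mem_support_of_mem_edges q hg)
    have hreach : ∀ u, T.G.Adj w u → s(w,z) ≠ s(w,u) →
        (T.G.deleteEdges {s(w,u)}).Reachable w (Sum.inl k) := by
      intro u hu hne
      have hadj' : (T.G.deleteEdges {s(w,u)}).Adj w z := by
        rw [deleteEdges_adj]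
        exact ⟨hwz, fun hh => hne (Set.mem_singleton_iff.mp hh)⟩
      have hq' : (T.G.deleteEdges {s(w,u)}).Reachable z (Sum.inl k) := by
        apply reach_del_of_walk q
        intro hmem
        exact hnw _ hmem (Sym2.mem_mk_left w u)
      exact hadj'.reachable.trans hq'
    have hrv : (T.G.deleteEdges {s(v,w)}).Reachable w (Sum.inl k) := by
      have := hreach v hvw.symm (by
        intro hh
        exact hzv (Sym2.congr_right.mp hh))
      rwa [Sym2.eq_swap] at this
    have hry : (T.G.deleteEdges {s(w,y)}).Reachable w (Sum.inl k) := by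
      exact hreach y hwy (by
        intro hh
        exact hzy (Sym2.congr_right.mp hh))
    have hkA : k ∈ side T s(v,w) w := hrv
    rw [hs] at hkA
    exact bridge T.isTree hwy (hry.trans (Reachable.symm hkA))

lemma side_inj {T : BinTree n} {v w x y} (hvw : T.G.Adj v w) (hxy : T.G.Adj x y)
    (hs : side T s(v,w) w = side T s(x,y) y) : v = x ∧ w = y := by
  have hs' : side T s(v,w) v = side T s(x,y) x := by
    rw [← side_compl hvw, ← side_compl hxy, hs]
  obtain ⟨k0, hk0⟩ := side_nonempty hvw
  have hk0' : k0 ∈ side T s(x,y) y := hs ▸ hk0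
  obtain ⟨k1, hk1⟩ : (side T s(v,w) v).Nonempty := by
    have := side_nonempty hvw.symm
    rwa [← side_swap] at this
  have hk1' : k1 ∈ side T s(x,y) x := hs' ▸ hk1
  by_cases hef : s(v,w) = s(x,y)
  · rcases Sym2.eq_iff.mp hef with ⟨rfl, rfl⟩ | ⟨rfl, rfl⟩
    · exact ⟨rfl, rfl⟩
    · exfalso
      -- v = y, w = x : then the two sides are complementary
      have : k0 ∈ side T s(v,w) v := by
        have := hk0'
        rwa [← hef] at this
      exact bridge T.isTree hvw (this.trans (Reachable.symm hk0))
  · exfalso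
    by_cases hyw : y = w
    · subst hyw
      have hvx : v ≠ x := fun hh => hef (by rw [hh])
      have hdisj := sides_disjoint hvw.symm hxy.symm hvx
      have m1 : k1 ∈ side T s(y,v) v := by rwa [← side_swap]
      have m2 : k1 ∈ side T s(y,x) x := by rwa [← side_swap]
      have : k1 ∈ (∅ : Set (Fin n)) := hdisj ▸ (Set.mem_inter m1 m2)
      exact this
    · by_cases hxv : x = v
      · subst hxv
        have hwy : w ≠ y := fun hh => hef (by rw [hh])
        have hdisj := sides_disjoint hvw hxy hwy
        have : k0 ∈ (∅ : Set (Fin n)) := hdisj ▸ (Set.mem_inter hk0 hk0')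
        exact this
      · by_cases hxw : x = w
        · subst hxw
          have hvy : v ≠ y := by
            intro hh
            exact hef (by rw [hh, Sym2.eq_swap])
          exact side_ne_chain hvw hxy hvy hs
        · by_cases hyv : y = v
          · subst hyv
            have hxw' : x ≠ w := hxw
            exact side_ne_chain hxy hvw hxw' hs.symm
          · -- edges are vertex-disjoint
            have hdisj : ∀ z, z ∈ s(v,w) → z ∈ s(x,y) → False := by
              intro z hz1 hz2
              rcases Sym2.mem_iff.mp hz1 with rfl | rfl <;>
                rcases Sym2.mem_iff.mp hz2 with h2 | h2
              · exact hxv h2.symm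
              · exact hyv h2.symm
              · exact hxw h2.symm
              · exact hyw h2.symm
            have hef' : s(x,y) ≠ s(v,w) := fun hh => hef hh.symm
            by_cases hi : (T.G.deleteEdges {s(v,w)}).Reachable w y
            · by_cases hii : (T.G.deleteEdges {s(x,y)}).Reachable y w
              · -- (i) ∧ (ii)
                obtain ⟨p, hp, hpe⟩ := exists_path_avoid (hk1 :
                  (T.G.deleteEdges {s(v,w)}).Reachable v (Sum.inl k1))
                by_cases hf : s(x,y) ∈ p.edges
                · have hy' : y ∈ p.support := Walk.snd_mem_support_of_mem_edges p hf
                  have : (T.G.deleteEdges {s(v,w)}).Reachable v y :=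
                    reach_del_support p hpe hy'
                  exact bridge T.isTree hvw (this.trans hi.symm)
                · have hadj' : (T.G.deleteEdges {s(x,y)}).Adj w v := by
                    rw [deleteEdges_adj]
                    exact ⟨hvw.symm, fun hh => hef' ((Set.mem_singleton_iff.mp hh).symm.trans (Sym2.eq_swap))⟩
                  have : (T.G.deleteEdges {s(x,y)}).Reachable y (Sum.inl k1) :=
                    (hii.trans hadj'.reachable).trans (reach_del_of_walk p hf)
                  exact bridge T.isTree hxy (hk1'.trans this.symm)
              · -- (i) ∧ ¬(ii) : use a leaf beyond deleting both edges from w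
                have hwx : (T.G.deleteEdges {s(x,y)}).Reachable w x := by
                  rcases reach_or (y := y) (y' := x) (T.isTree.1.1 w y) with h1 | h1
                  · rw [Sym2.eq_swap] at h1
                    exact absurd h1.symm hii
                  · rwa [Sym2.eq_swap] at h1
                obtain ⟨l, hl⟩ := two_del_nonempty (T := T) hdisj w
                have hle : (T.G.deleteEdges {s(v,w)}).Reachable w (Sum.inl l) :=
                  hl.mono (deleteEdges_anti (by simp))
                have hlf : (T.G.deleteEdges {s(x,y)}).Reachable w (Sum.inl l) :=
                  hl.mono (deleteEdges_anti (by simp))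
                have : l ∈ side T s(x,y) y := hs ▸ (hle : l ∈ side T s(v,w) w)
                exact bridge T.isTree hxy
                  (((hwx.symm.trans hlf).trans (Reachable.symm this)).symm).symm
            · by_cases hii : (T.G.deleteEdges {s(x,y)}).Reachable y w
              · -- ¬(i) ∧ (ii)
                have hyv' : (T.G.deleteEdges {s(v,w)}).Reachable y v := by
                  rcases reach_or (y := w) (y' := v) (T.isTree.1.1 y w) with h1 | h1
                  · rw [Sym2.eq_swap] at h1
                    exact absurd h1.symm hi
                  · rwa [Sym2.eq_swap] at h1
                obtain ⟨l, hl⟩ := two_del_nonempty (T := T) hdisj y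
                have hle : (T.G.deleteEdges {s(v,w)}).Reachable y (Sum.inl l) :=
                  hl.mono (deleteEdges_anti (by simp))
                have hlf : (T.G.deleteEdges {s(x,y)}).Reachable y (Sum.inl l) :=
                  hl.mono (deleteEdges_anti (by simp))
                have : l ∈ side T s(v,w) w := hs.symm ▸ (hlf : l ∈ side T s(x,y) y)
                exact bridge T.isTree hvw
                  (((hyv'.symm.trans hle).trans (Reachable.symm this)).symm).symm
              · -- ¬(i) ∧ ¬(ii)
                have hwx : (T.G.deleteEdges {s(x,y)}).Reachable w x := by
                  rcases reach_or (y := y) (y' := x) (T.isTree.1.1 w y) with h1 | h1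
                  · rw [Sym2.eq_swap] at h1
                    exact absurd h1.symm hii
                  · rwa [Sym2.eq_swap] at h1
                obtain ⟨p, hp, hpe⟩ := exists_path_avoid (hk0 :
                  (T.G.deleteEdges {s(v,w)}).Reachable w (Sum.inl k0))
                by_cases hf : s(x,y) ∈ p.edges
                · have hy' : y ∈ p.support := Walk.snd_mem_support_of_mem_edges p hf
                  exact hi (reach_del_support p hpe hy')
                · have : (T.G.deleteEdges {s(x,y)}).Reachable w (Sum.inl k0) :=
                    reach_del_of_walk p hf
                  exact bridge T.isTree hxy
                    (((hwx.symm.trans this).trans (Reachable.symm hk0')).symm).symm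
end TreeSplit

namespace TreeSplit

variable {n : ℕ}

lemma vertex_cover {T : BinTree n} {v z : Fin n ⊕ Fin (n-2)} (hvz : z ≠ v) :
    ∃ x, T.G.Adj v x ∧ (T.G.deleteEdges {s(v,x)}).Reachable x z := by
  obtain ⟨p0⟩ := T.isTree.1.1 v z
  obtain ⟨p, hp⟩ := p0.toPath
  cases p with
  | nil => exact absurd rfl hvz.symm
  | @cons u x w hadj q =>
    have hq := (Walk.cons_isPath_iff hadj q).mp hp
    refine ⟨x, hadj, reach_del_of_walk q ?_⟩
    intro hmem
    exact hq.2 (Walk.fst_mem_support_of_mem_edges q hmem)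

lemma meet {T : BinTree n} {j : Fin (n-2)} {w1 w2 w3 u y : Fin n ⊕ Fin (n-2)}
    (hn : T.G.neighborSet (Sum.inr j) = {w1,w2,w3})
    (h12 : w1 ≠ w2) (h13 : w1 ≠ w3) (h23 : w2 ≠ w3)
    (hf : T.G.Adj u y)
    (hsub : side T s(u,y) y ⊆
      side T s(Sum.inr j,w2) w2 ∪ side T s(Sum.inr j,w3) w3)
    (hne : side T s(u,y) y ≠
      side T s(Sum.inr j,w2) w2 ∪ side T s(Sum.inr j,w3) w3)
    (h2 : (side T s(u,y) y ∩ side T s(Sum.inr j,w2) w2).Nonempty)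
    (h3 : (side T s(u,y) y ∩ side T s(Sum.inr j,w3) w3).Nonempty) : False := by
  set v : Fin n ⊕ Fin (n-2) := Sum.inr j with hvdef
  have hnbr : ∀ t, T.G.Adj v t ↔ t = w1 ∨ t = w2 ∨ t = w3 := by
    intro t
    constructor
    · intro ht
      have : t ∈ T.G.neighborSet (Sum.inr j) := ht
      rw [hn] at this; simpa using this
    · intro ht
      have : t ∈ T.G.neighborSet (Sum.inr j) := by rw [hn]; simpa using ht
      exact this
  have hg1 : T.G.Adj v w1 := (hnbr w1).mpr (Or.inl rfl)
  have hg2 : T.G.Adj v w2 := (hnbr w2).mpr (Or.inr (Or.inl rfl))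
  have hg3 : T.G.Adj v w3 := (hnbr w3).mpr (Or.inr (Or.inr rfl))
  set D := side T s(u,y) y with hDdef
  set B1 := side T s(v,w1) w1 with hB1
  set B2 := side T s(v,w2) w2 with hB2
  set B3 := side T s(v,w3) w3 with hB3
  have hD1 : D ∩ B1 = ∅ := by
    ext k
    simp only [Set.mem_inter_iff, Set.mem_empty_iff_false, iff_false, not_and]
    intro hkD hkB
    rcases hsub hkD with hk | hk
    · have := sides_disjoint hg1 hg2 h12
      exact absurd (Set.mem_inter hkB hk) (by rw [this]; exact fun h => h)
    · have := sides_disjoint hg1 hg3 h13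
      exact absurd (Set.mem_inter hkB hk) (by rw [this]; exact fun h => h)
  -- case: f is incident to v
  by_cases hyv : y = v
  · have hvu : T.G.Adj v u := hyv ▸ hf.symm
    have hu : u = w1 ∨ u = w2 ∨ u = w3 := (hnbr u).mp hvu
    have hDc : D = (side T s(v,u) u)ᶜ := by
      rw [hDdef, hyv, side_swap]
      exact (side_compl hvu).symm
    rcases hu with hu1 | hu1 | hu1
    · -- D = B1ᶜ ⊇ B2 ∪ B3, and D ⊆ B2 ∪ B3, so D = B2 ∪ B3
      have hDB : D = B1ᶜ := by rw [hDc, hu1]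
      apply hne
      refine Set.Subset.antisymm hsub (Set.union_subset ?_ ?_)
      · rw [hDB]
        intro k hk
        simp only [Set.mem_compl_iff]
        intro hk1
        have := Set.mem_inter hk1 hk
        rw [sides_disjoint hg1 hg2 h12] at this
        exact this
      · rw [hDB]
        intro k hk
        simp only [Set.mem_compl_iff]
        intro hk1
        have := Set.mem_inter hk1 hk
        rw [sides_disjoint hg1 hg3 h13] at this
        exact this
    · have hDB : D = B2ᶜ := by rw [hDc, hu1]
      obtain ⟨l, hl⟩ := side_nonempty hg1
      have hlD : l ∈ D := by
        rw [hDB]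
        simp only [Set.mem_compl_iff]
        intro hl2
        have := Set.mem_inter hl hl2
        rw [sides_disjoint hg1 hg2 h12] at this
        exact this
      have := Set.mem_inter hlD hl
      rw [hD1] at this
      exact this
    · have hDB : D = B3ᶜ := by rw [hDc, hu1]
      obtain ⟨l, hl⟩ := side_nonempty hg1
      have hlD : l ∈ D := by
        rw [hDB]
        simp only [Set.mem_compl_iff]
        intro hl3
        have := Set.mem_inter hl hl3
        rw [sides_disjoint hg1 hg3 h13] at this
        exact this
      have := Set.mem_inter hlD hl
      rw [hD1] at this
      exact this
  · by_cases huv : u = v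
    · have hy : y = w1 ∨ y = w2 ∨ y = w3 := (hnbr y).mp (huv ▸ hf)
      rcases hy with hy1 | hy1 | hy1
      · have hDB : D = B1 := by rw [hDdef, huv, hy1]
        obtain ⟨l, hlD, hlB⟩ := h2
        rw [hDB] at hlD
        have := Set.mem_inter hlD hlB
        rw [sides_disjoint hg1 hg2 h12] at this
        exact this
      · have hDB : D = B2 := by rw [hDdef, huv, hy1]
        obtain ⟨l, hlD, hlB⟩ := h3
        rw [hDB] at hlD
        have := Set.mem_inter hlD hlB
        rw [sides_disjoint hg2 hg3 h23] at this
        exact this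
      · have hDB : D = B3 := by rw [hDdef, huv, hy1]
        obtain ⟨l, hlD, hlB⟩ := h2
        rw [hDB] at hlD
        have := Set.mem_inter hlD hlB
        rw [sides_disjoint hg3 hg2 h23.symm] at this
        exact this
    · -- f is not incident to v
      have hfv : ∀ t, s(v,t) ≠ s(u,y) := by
        intro t hh
        have : v ∈ s(u,y) := hh ▸ Sym2.mem_mk_left v t
        rcases Sym2.mem_iff.mp this with h1 | h1
        · exact huv h1.symm
        · exact hyv h1.symm
      obtain ⟨x, hvx, hyloc⟩ := vertex_cover (T := T) (v := v) (hvz := hyv)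
      -- orientation of f
      have horib : (T.G.deleteEdges {s(u,y)}).Reachable v y ∨
          (T.G.deleteEdges {s(u,y)}).Reachable v u := by
        rcases reach_or (y := y) (y' := u) (T.isTree.1.1 v y) with h1 | h1
        · left; rwa [Sym2.eq_swap] at h1
        · right; rwa [Sym2.eq_swap] at h1
      -- helper: for a branch wb avoiding both w-branch of y and with lb in D ∩ Bb, inward
      -- orientation is impossible; outward orientation puts side(g1-complement) leaves in D
      have hbranch : ∀ wa wb, T.G.Adj v wa → T.G.Adj v wb → wa ≠ wb →
          (T.G.deleteEdges {s(v,wa)}).Reachable wa y →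
          ∀ l, l ∈ side T s(v,wb) wb →
          (T.G.deleteEdges {s(u,y)}).Reachable v (Sum.inl l) := by
        intro wa wb ha hb hab hyl l hl
        have hlva : l ∈ side T s(v,wa) v := by
          rw [← side_compl ha]
          simp only [Set.mem_compl_iff]
          intro hla
          exact absurd (Set.mem_inter hla hl)
            (by rw [sides_disjoint ha hb hab]; exact fun h => h)
        obtain ⟨q, hq, hqe⟩ := exists_path_avoid (hlva :
          (T.G.deleteEdges {s(v,wa)}).Reachable v (Sum.inl l))
        by_cases hfq : s(u,y) ∈ q.edges
        · exfalso
          have hyq : y ∈ q.support := Walk.snd_mem_support_of_mem_edges q hfq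
          have : (T.G.deleteEdges {s(v,wa)}).Reachable v y := reach_del_support q hqe hyq
          exact bridge T.isTree ha (this.trans hyl.symm)
        · exact reach_del_of_walk q hfq
      rcases (hnbr x).mp hvx with hx | hx | hx <;> rw [hx] at hyloc
      · -- y lies in branch w1
        rcases horib with hout | hin
        · apply hne
          have hsub2 : ∀ wb, T.G.Adj v wb → wb ≠ w1 → side T s(v,wb) wb ⊆ D := by
            intro wb hb hb1 l hl
            -- path from wb to leaf l avoiding s(v,wb)
            obtain ⟨q, hq, hqe⟩ := exists_path_avoid (hl :
              (T.G.deleteEdges {s(v,wb)}).Reachable wb (Sum.inl l))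
            have hfq : s(u,y) ∉ q.edges := by
              intro hfq
              have hyq : y ∈ q.support := Walk.snd_mem_support_of_mem_edges q hfq
              have h1 : (T.G.deleteEdges {s(v,wb)}).Reachable wb y :=
                reach_del_support q hqe hyq
              obtain ⟨r, hr, hre⟩ := exists_path_avoid h1
              by_cases hg1r : s(v,w1) ∈ r.edges
              · have : v ∈ r.support := Walk.fst_mem_support_of_mem_edges r hg1r
                have := reach_del_support r hre this
                exact bridge T.isTree hb (this.symm)
              · have h2' : (T.G.deleteEdges {s(v,w1)}).Reachable wb y :=
                  reach_del_of_walk r hg1r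
                have hadj' : (T.G.deleteEdges {s(v,w1)}).Adj v wb := by
                  rw [deleteEdges_adj]
                  exact ⟨hb, fun hh => hb1 (Sym2.congr_right.mp
                    (Set.mem_singleton_iff.mp hh).symm).symm⟩
                exact bridge T.isTree hg1
                  ((hadj'.reachable.trans h2').trans hyloc.symm)
            have hwbl : (T.G.deleteEdges {s(u,y)}).Reachable wb (Sum.inl l) :=
              reach_del_of_walk q hfq
            have hadjf : (T.G.deleteEdges {s(u,y)}).Adj v wb := by
              rw [deleteEdges_adj]
              exact ⟨hb, fun hh => hfv wb (Set.mem_singleton_iff.mp hh)⟩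
            exact (hout.symm.trans (hadjf.reachable.trans hwbl) :
              (T.G.deleteEdges {s(u,y)}).Reachable y (Sum.inl l))
          exact Set.Subset.antisymm hsub
            (Set.union_subset (hsub2 w2 hg2 h12.symm) (hsub2 w3 hg3 h13.symm))
        · obtain ⟨l, hlD, hlB2⟩ := h2
          have := hbranch w1 w2 hg1 hg2 h12 hyloc l hlB2
          exact bridge T.isTree hf
            ((hin.symm.trans this).trans (Reachable.symm hlD))
      · -- y lies in branch w2 : use l ∈ D ∩ B3
        rcases horib with hout | hin
        · obtain ⟨l, hl⟩ := side_nonempty hg1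
          have hrl := hbranch w2 w1 hg2 hg1 h12.symm hyloc l hl
          have hlD : l ∈ D := (hout.symm.trans hrl :
            (T.G.deleteEdges {s(u,y)}).Reachable y (Sum.inl l))
          exact absurd (Set.mem_inter hlD hl) (by rw [hD1]; exact fun h => h)
        · obtain ⟨l, hlD, hlB3⟩ := h3
          have := hbranch w2 w3 hg2 hg3 h23 hyloc l hlB3
          exact bridge T.isTree hf
            ((hin.symm.trans this).trans (Reachable.symm hlD))
      · -- y lies in branch w3 : use l ∈ D ∩ B2
        rcases horib with hout | hin
        · obtain ⟨l, hl⟩ := side_nonempty hg1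
          have hrl := hbranch w3 w1 hg3 hg1 h13.symm hyloc l hl
          have hlD : l ∈ D := (hout.symm.trans hrl :
            (T.G.deleteEdges {s(u,y)}).Reachable y (Sum.inl l))
          exact absurd (Set.mem_inter hlD hl) (by rw [hD1]; exact fun h => h)
        · obtain ⟨l, hlD, hlB2⟩ := h2
          have := hbranch w3 w2 hg3 hg2 h23.symm hyloc l hlB2
          exact bridge T.isTree hf
            ((hin.symm.trans this).trans (Reachable.symm hlD))
end TreeSplit

namespace TreeSplit

variable {n : ℕ}

lemma nbr_iff {T : BinTree n} {j : Fin (n-2)} {w1 w2 w3 : Fin n ⊕ Fin (n-2)}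
    (hn : T.G.neighborSet (Sum.inr j) = {w1,w2,w3}) :
    ∀ t, T.G.Adj (Sum.inr j) t ↔ t = w1 ∨ t = w2 ∨ t = w3 := by
  intro t
  constructor
  · intro ht
    have : t ∈ T.G.neighborSet (Sum.inr j) := ht
    rw [hn] at this; simpa using this
  · intro ht
    have : t ∈ T.G.neighborSet (Sum.inr j) := by rw [hn]; simpa using ht
    exact this

lemma away_union {T : BinTree n} {j : Fin (n-2)} {w1 w2 w3 : Fin n ⊕ Fin (n-2)}
    (hn : T.G.neighborSet (Sum.inr j) = {w1,w2,w3})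
    (h12 : w1 ≠ w2) (h13 : w1 ≠ w3) (h23 : w2 ≠ w3) :
    side T s(Sum.inr j, w1) (Sum.inr j) =
      side T s(Sum.inr j, w2) w2 ∪ side T s(Sum.inr j, w3) w3 := by
  have hnbr := nbr_iff hn
  have hg1 : T.G.Adj (Sum.inr j) w1 := (hnbr w1).mpr (Or.inl rfl)
  have hg2 : T.G.Adj (Sum.inr j) w2 := (hnbr w2).mpr (Or.inr (Or.inl rfl))
  have hg3 : T.G.Adj (Sum.inr j) w3 := (hnbr w3).mpr (Or.inr (Or.inr rfl))
  ext k
  simp only [Set.mem_union]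
  constructor
  · intro hk
    have hk1 : k ∉ side T s(Sum.inr j, w1) w1 := by
      intro hh
      exact bridge T.isTree hg1
        ((hk : (T.G.deleteEdges {s(Sum.inr j, w1)}).Reachable _ _).trans hh.symm)
    obtain ⟨x, hvx, hkx⟩ := side_cover (T := T) (v := Sum.inr j) (k := k) (by simp)
    rcases (hnbr x).mp hvx with hx | hx | hx <;> rw [hx] at hkx
    · exact absurd hkx hk1
    · exact Or.inl hkx
    · exact Or.inr hkx
  · intro hk
    have hk1 : k ∉ side T s(Sum.inr j, w1) w1 := by
      intro hh
      rcases hk with hk | hk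
      · have := Set.mem_inter hh hk
        rw [sides_disjoint hg1 hg2 h12] at this
        exact this
      · have := Set.mem_inter hh hk
        rw [sides_disjoint hg1 hg3 h13] at this
        exact this
    have : k ∈ (side T s(Sum.inr j, w1) w1)ᶜ := hk1
    rwa [side_compl hg1] at this

/-- The key lemma: the image vertex for an internal vertex of `S`. -/
lemma key {S T : BinTree n} (h : S.splits = T.splits) (j : Fin (n-2)) :
    ∃ v', ∀ w, S.G.Adj (Sum.inr j) w →
      ∃ w', T.G.Adj v' w' ∧ side S s(Sum.inr j, w) w = side T s(v', w') w' := by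
  classical
  set v : Fin n ⊕ Fin (n-2) := Sum.inr j with hvdef
  obtain ⟨a, b, c, hab, hac, hbc, hset⟩ := Set.ncard_eq_three.mp (S.degInternal j)
  have hnbrS := nbr_iff (T := S) (j := j) hset
  have hga : S.G.Adj v a := (hnbrS a).mpr (Or.inl rfl)
  have hgb : S.G.Adj v b := (hnbrS b).mpr (Or.inr (Or.inl rfl))
  have hgc : S.G.Adj v c := (hnbrS c).mpr (Or.inr (Or.inr rfl))
  set A := side S s(v,a) a with hA
  set B := side S s(v,b) b with hB
  set C := side S s(v,c) c with hC
  -- transport A to T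
  have hAT : A ∈ T.splits := h ▸ side_mem_splits hga
  obtain ⟨x, y, hxy, hArep⟩ := splits_elim hAT
  refine ⟨x, ?_⟩
  -- x is not a leaf
  obtain ⟨lb, hlb⟩ := side_nonempty hgb
  obtain ⟨lc, hlc⟩ := side_nonempty hgc
  have hlbA : lb ∉ A := by
    intro hh
    have := Set.mem_inter hh hlb
    rw [sides_disjoint hga hgb hab] at this
    exact this
  have hlcA : lc ∉ A := by
    intro hh
    have := Set.mem_inter hh hlc
    rw [sides_disjoint hga hgc hac] at this
    exact this
  have hlbc : lb ≠ lc := by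
    intro hh
    have := Set.mem_inter hlb (hh ▸ hlc)
    rw [sides_disjoint hgb hgc hbc] at this
    exact this
  have hxint : ∀ i : Fin n, x ≠ Sum.inl i := by
    intro i hxi
    have hcompl : Aᶜ = side T s(x,y) x := by
      rw [hArep, side_compl hxy]
    have hsl : side T s(x,y) x = {i} := by
      rw [hxi] at hxy ⊢
      exact side_leaf hxy
    have hlb' : lb ∈ ({i} : Set (Fin n)) := by
      rw [← hsl, ← hcompl]; exact hlbA
    have hlc' : lc ∈ ({i} : Set (Fin n)) := by
      rw [← hsl, ← hcompl]; exact hlcA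
    exact hlbc (hlb'.trans hlc'.symm)
  obtain ⟨j', hj'⟩ : ∃ j' : Fin (n-2), x = Sum.inr j' := by
    cases x with
    | inl i => exact absurd rfl (hxint i)
    | inr j' => exact ⟨j', rfl⟩
  -- the other two neighbours of x in T
  obtain ⟨P1, P2, P3, hp12, hp13, hp23, hPset⟩ := Set.ncard_eq_three.mp (T.degInternal j')
  have hPset' : T.G.neighborSet x = {P1, P2, P3} := by rw [hj']; exact hPset
  have hnbrT := nbr_iff (T := T) (j := j') hPset
  have hyP : y = P1 ∨ y = P2 ∨ y = P3 := by
    have := (hnbrT y).mp (by rw [← hj']; exact hxy)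
    exact this
  obtain ⟨y2, y3, hy2, hy3, hy23, hnT⟩ :
      ∃ y2 y3, y2 ≠ y ∧ y3 ≠ y ∧ y2 ≠ y3 ∧ T.G.neighborSet x = {y, y2, y3} := by
    rcases hyP with hy | hy | hy
    · exact ⟨P2, P3, by rw [hy]; exact fun hh => hp12 hh.symm,
        by rw [hy]; exact fun hh => hp13 hh.symm, hp23, by
          rw [hPset', hy]⟩
    · refine ⟨P1, P3, by rw [hy]; exact hp12, by rw [hy]; exact fun hh => hp23 hh.symm,
        hp13, ?_⟩
      rw [hPset', hy]
      ext z; simp; tauto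
    · refine ⟨P1, P2, by rw [hy]; exact hp13, by rw [hy]; exact hp23, hp12, ?_⟩
      rw [hPset', hy]
      ext z; simp; tauto
  have hnT' : T.G.neighborSet (Sum.inr j') = {y, y2, y3} := by rw [← hj']; exact hnT
  have hnbrT' := nbr_iff (T := T) (j := j') hnT'
  have hty2 : T.G.Adj x y2 := by
    rw [hj']; exact (hnbrT' y2).mpr (Or.inr (Or.inl rfl))
  have hty3 : T.G.Adj x y3 := by
    rw [hj']; exact (hnbrT' y3).mpr (Or.inr (Or.inr rfl))
  set B2 := side T s(x,y2) y2 with hB2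
  set B3 := side T s(x,y3) y3 with hB3
  -- complements agree
  have hAcS : Aᶜ = B ∪ C := by
    have := away_union (T := S) hset hab hac hbc
    rw [hA, side_compl hga]
    exact this
  have hAcT : Aᶜ = B2 ∪ B3 := by
    have h1 := away_union (T := T) hnT' (fun hh => hy2 hh.symm) (fun hh => hy3 hh.symm) hy23
    have h2 : Aᶜ = side T s(x, y) x := by rw [hArep, side_compl hxy]
    rw [hB2, hB3, h2, hj']
    exact h1
  -- B and C are splits of T
  have hBT : B ∈ T.splits := h ▸ side_mem_splits hgb
  have hCT : C ∈ T.splits := h ▸ side_mem_splits hgc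
  obtain ⟨ub, yb, hubyb, hBrep⟩ := splits_elim hBT
  obtain ⟨uc, yc, hucyc, hCrep⟩ := splits_elim hCT
  have hxy2ne : y2 ≠ y3 := hy23
  -- nonemptiness of B2 B3
  obtain ⟨m2, hm2⟩ : B2.Nonempty := side_nonempty hty2
  obtain ⟨m3, hm3⟩ : B3.Nonempty := side_nonempty hty3
  have hB23disj : B2 ∩ B3 = ∅ := by
    have := sides_disjoint hty2 hty3 hy23
    rw [hB2, hB3]
    exact this
  -- determine which of B2, B3 a given S-away-side equals
  have determine : ∀ (D : Set (Fin n)) (uD yD : Fin n ⊕ Fin (n-2)),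
      T.G.Adj uD yD → D = side T s(uD,yD) yD → D ⊆ B2 ∪ B3 → D.Nonempty →
      D ≠ B2 ∪ B3 → D ⊆ B2 ∨ D ⊆ B3 := by
    intro D uD yD hadj hrep hsubD hDne hDneq
    by_cases h2' : (D ∩ B2).Nonempty
    · by_cases h3' : (D ∩ B3).Nonempty
      · exfalso
        apply meet (T := T) (j := j') (w1 := y) (w2 := y2) (w3 := y3) hnT'
          (fun hh => hy2 hh.symm) (fun hh => hy3 hh.symm) hy23 hadj
        · rw [← hj', ← hB2, ← hB3, ← hrep]; exact hsubD
        · rw [← hj', ← hB2, ← hB3, ← hrep]; exact hDneq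
        · rw [← hj', ← hB2, ← hrep]; exact h2'
        · rw [← hj', ← hB3, ← hrep]; exact h3'
      · left
        intro k hk
        rcases hsubD hk with hk2 | hk3
        · exact hk2
        · exact absurd (⟨k, Set.mem_inter hk hk3⟩ : (D ∩ B3).Nonempty) h3'
    · right
      intro k hk
      rcases hsubD hk with hk2 | hk3
      · exact absurd (⟨k, Set.mem_inter hk hk2⟩ : (D ∩ B2).Nonempty) h2'
      · exact hk3
  have hBsub : B ⊆ B2 ∪ B3 := by
    rw [← hAcT]
    intro k hk hkA
    have := Set.mem_inter hkA hk
    rw [hA, hB, sides_disjoint hga hgb hab] at this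
    exact this
  have hCsub : C ⊆ B2 ∪ B3 := by
    rw [← hAcT]
    intro k hk hkA
    have := Set.mem_inter hkA hk
    rw [hA, hC, sides_disjoint hga hgc hac] at this
    exact this
  have hBCdisj : B ∩ C = ∅ := by
    have := sides_disjoint hgb hgc hbc
    rw [hB, hC]; exact this
  have hBneq : B ≠ B2 ∪ B3 := by
    intro hh
    rw [← hAcT, hAcS] at hh
    have : lc ∈ B := by rw [hh]; exact Or.inr hlc
    have := Set.mem_inter this hlc
    rw [hBCdisj] at this
    exact this
  have hCneq : C ≠ B2 ∪ B3 := by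
    intro hh
    rw [← hAcT, hAcS] at hh
    have : lb ∈ C := by rw [hh]; exact Or.inl hlb
    have := Set.mem_inter hlb this
    rw [hBCdisj] at this
    exact this
  have hBd := determine B ub yb hubyb hBrep hBsub ⟨lb, hlb⟩ hBneq
  have hCd := determine C uc yc hucyc hCrep hCsub ⟨lc, hlc⟩ hCneq
  -- B and C go to different branches
  have hdiff : (B ⊆ B2 ∧ C ⊆ B3) ∨ (B ⊆ B3 ∧ C ⊆ B2) := by
    rcases hBd with hB' | hB' <;> rcases hCd with hC' | hC'
    · exfalso
      have hsub3 : B3 ⊆ B2 := by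
        intro k hk
        have hku : k ∈ B ∪ C := by
          rw [← hAcS, hAcT]
          exact Or.inr hk
        rcases hku with hk' | hk'
        · exact hB' hk'
        · exact hC' hk'
      have := Set.mem_inter (hsub3 hm3) hm3
      rw [hB23disj] at this
      exact this
    · exact Or.inl ⟨hB', hC'⟩
    · exact Or.inr ⟨hB', hC'⟩
    · exfalso
      have hsub2 : B2 ⊆ B3 := by
        intro k hk
        have hku : k ∈ B ∪ C := by
          rw [← hAcS, hAcT]
          exact Or.inl hk
        rcases hku with hk' | hk'
        · exact hB' hk'
        · exact hC' hk'
      have := Set.mem_inter hm2 (hsub2 hm2)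
      rw [hB23disj] at this
      exact this
  -- upgrade inclusions to equalities
  have upgrade : ∀ (D D' E : Set (Fin n)), D ⊆ E → D' ∩ E = ∅ → E ⊆ D ∪ D' → D = E := by
    intro D D' E h1 h2 h3
    refine Set.Subset.antisymm h1 ?_
    intro k hk
    rcases h3 hk with hk' | hk'
    · exact hk'
    · exfalso
      have hmem : k ∈ D' ∩ E := Set.mem_inter hk' hk
      rw [h2] at hmem
      exact hmem
  have hBCcover : B2 ∪ B3 ⊆ B ∪ C := by
    rw [← hAcT, hAcS]
  rcases hdiff with ⟨hBeq', hCeq'⟩ | ⟨hBeq', hCeq'⟩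
  · have hBeq : B = B2 := by
      apply upgrade B C B2 hBeq'
      · ext k
        simp only [Set.mem_inter_iff, Set.mem_empty_iff_false, iff_false, not_and]
        intro hkC hk2
        have := Set.mem_inter hk2 (hCeq' hkC)
        rw [hB23disj] at this
        exact this
      · intro k hk
        exact hBCcover (Or.inl hk)
    have hCeq : C = B3 := by
      apply upgrade C B B3 hCeq'
      · ext k
        simp only [Set.mem_inter_iff, Set.mem_empty_iff_false, iff_false, not_and]
        intro hkB hk3
        have := Set.mem_inter (hBeq' hkB) hk3
        rw [hB23disj] at this
        exact this
      · intro k hk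
        rcases hBCcover (Or.inr hk) with h' | h'
        · exact Or.inr h'
        · exact Or.inl h'
    intro w hw
    rcases (hnbrS w).mp hw with hw' | hw' | hw'
    · exact ⟨y, hxy, by rw [hw']; exact hArep⟩
    · exact ⟨y2, hty2, by rw [hw']; exact hBeq⟩
    · exact ⟨y3, hty3, by rw [hw']; exact hCeq⟩
  · have hBeq : B = B3 := by
      apply upgrade B C B3 hBeq'
      · ext k
        simp only [Set.mem_inter_iff, Set.mem_empty_iff_false, iff_false, not_and]
        intro hkC hk3
        have := Set.mem_inter (hCeq' hkC) hk3
        rw [hB23disj] at this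
        exact this
      · intro k hk
        exact hBCcover (Or.inr hk)
    have hCeq : C = B2 := by
      apply upgrade C B B2 hCeq'
      · ext k
        simp only [Set.mem_inter_iff, Set.mem_empty_iff_false, iff_false, not_and]
        intro hkB hk2
        have := Set.mem_inter hk2 (hBeq' hkB)
        rw [hB23disj] at this
        exact this
      · intro k hk
        rcases hBCcover (Or.inl hk) with h' | h'
        · exact Or.inr h'
        · exact Or.inl h'
    intro w hw
    rcases (hnbrS w).mp hw with hw' | hw' | hw'
    · exact ⟨y, hxy, by rw [hw']; exact hArep⟩
    · exact ⟨y3, hty3, by rw [hw']; exact hBeq⟩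
    · exact ⟨y2, hty2, by rw [hw']; exact hCeq⟩
end TreeSplit

namespace TreeSplit

variable {n : ℕ}

lemma leaf_main {S T : BinTree n} (h : S.splits = T.splits) (i : Fin n) :
    ∀ w, S.G.Adj (Sum.inl i) w →
      ∃ w', T.G.Adj (Sum.inl i) w' ∧
        side S s(Sum.inl i, w) w = side T s(Sum.inl i, w') w' := by
  intro w hw
  obtain ⟨a, ha⟩ := Set.ncard_eq_one.mp (T.degLeaf i)
  have hadj : T.G.Adj (Sum.inl i) a := by
    have : a ∈ T.G.neighborSet (Sum.inl i) := by rw [ha]; exact Set.mem_singleton _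
    exact this
  refine ⟨a, hadj, ?_⟩
  have e1 : (side S s(Sum.inl i, w) w)ᶜ = {i} := by rw [side_compl hw, side_leaf hw]
  have e2 : (side T s(Sum.inl i, a) a)ᶜ = {i} := by rw [side_compl hadj, side_leaf hadj]
  exact compl_injective (e1.trans e2.symm)

lemma main_map {S T : BinTree n} (h : S.splits = T.splits) :
    ∃ f : (Fin n ⊕ Fin (n-2)) → (Fin n ⊕ Fin (n-2)),
      (∀ i, f (Sum.inl i) = Sum.inl i) ∧
      ∀ z w, S.G.Adj z w → ∃ w', T.G.Adj (f z) w' ∧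
        side S s(z,w) w = side T s(f z, w') w' := by
  classical
  choose v' hv' using fun j => key h j
  refine ⟨fun z => Sum.rec (fun i => Sum.inl i) (fun j => v' j) z, fun i => rfl, ?_⟩
  intro z w hw
  cases z with
  | inl i => exact leaf_main h i w hw
  | inr j => exact hv' j w hw

lemma adj_forward {S T : BinTree n} {f : (Fin n ⊕ Fin (n-2)) → (Fin n ⊕ Fin (n-2))}
    (hmain : ∀ z w, S.G.Adj z w → ∃ w', T.G.Adj (f z) w' ∧
      side S s(z,w) w = side T s(f z, w') w')
    {z w} (hzw : S.G.Adj z w) : T.G.Adj (f z) (f w) := by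
  obtain ⟨w', ht1, e1⟩ := hmain z w hzw
  obtain ⟨z', ht2, e2⟩ := hmain w z hzw.symm
  have ec : side S s(w,z) z = (side S s(z,w) w)ᶜ := by
    rw [side_compl hzw]
    exact side_swap
  have ekey : side S s(w,z) z = side T s(w', f z) (f z) := by
    rw [ec, e1, side_compl ht1]
    exact side_swap
  have hres := side_inj ht2 ht1.symm (e2.symm.trans ekey)
  rw [← hres.1] at ht1
  exact ht1

theorem determined {S T : BinTree n} (h : S.splits = T.splits) : S.LabelEquiv T := by
  obtain ⟨f, hfl, hf⟩ := main_map h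
  obtain ⟨g, hgl, hg⟩ := main_map h.symm
  have hgf : ∀ z, g (f z) = z := by
    intro z
    cases z with
    | inl i => rw [hfl, hgl]
    | inr j =>
      obtain ⟨a, b, c, hab, hac, hbc, hset⟩ := Set.ncard_eq_three.mp (S.degInternal j)
      have hga : S.G.Adj (Sum.inr j) a := (nbr_iff hset a).mpr (Or.inl rfl)
      obtain ⟨w', ht1, e1⟩ := hf (Sum.inr j) a hga
      obtain ⟨w'', ht2, e2⟩ := hg (f (Sum.inr j)) w' ht1
      exact (side_inj hga ht2 (e1.trans e2)).1.symm
  have hfg : ∀ z, f (g z) = z := by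
    intro z
    cases z with
    | inl i => rw [hgl, hfl]
    | inr j =>
      obtain ⟨a, b, c, hab, hac, hbc, hset⟩ := Set.ncard_eq_three.mp (T.degInternal j)
      have hga : T.G.Adj (Sum.inr j) a := (nbr_iff hset a).mpr (Or.inl rfl)
      obtain ⟨w', ht1, e1⟩ := hg (Sum.inr j) a hga
      obtain ⟨w'', ht2, e2⟩ := hf (g (Sum.inr j)) w' ht1
      exact (side_inj hga ht2 (e1.trans e2)).1.symm
  refine ⟨⟨⟨f, g, hgf, hfg⟩, ?_⟩, fun i => hfl i⟩
  intro u v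
  simp only [Equiv.coe_fn_mk]
  constructor
  · intro hadj
    have := adj_forward hg hadj
    rwa [hgf, hgf] at this
  · intro hadj
    exact adj_forward hf hadj

end TreeSplit


/-- An unrooted binary leaf-labelled tree on `n ≥ 4` leaves is uniquely
determined by its set of splits. -/
theorem tree_determined_by_splits (n : ℕ) (hn : 4 ≤ n) (S T : BinTree n)
    (h : S.splits = T.splits) : S.LabelEquiv T :=
  TreeSplit.determined h
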